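/- arXiv:1611.06907 — 8 statements merged into one kernel-verified Lean document; each statement's English description precedes it below -/
import Mathlib

section
/- Let p be a prime and a ≥ b ≥ 1 integers. Then p divides all of the binomial coefficients C(a, b), C(a-1, b-1), ..., C(a-b+1, 1) if and only if a - b ≡ -1 (mod p^{l_p(b)}), where l_p(b) is the smallest nonnegative integer such that b < p^{l_p(b)}. -/
open Nat Finset

lemma succ_mod_aux {c m : ℕ} (hm : 1 < m) :
    (c + 1) % m = if c % m = m - 1 then 0 else c % m + 1 := by
  have h1 : (c + 1) % m = (c % m + 1) % m := by
    conv_lhs => rw [Nat.add_mod]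
    rw [Nat.mod_eq_of_lt hm]
  have h2 : c % m < m := Nat.mod_lt _ (by omega)
  split_ifs with h
  · rw [h1, h, Nat.sub_add_cancel (by omega), Nat.mod_self]
  · rw [h1, Nat.mod_eq_of_lt (by omega)]

lemma carry_dvd_choose {p : ℕ} (hp : p.Prime) (c k : ℕ) :
    p ∣ (c + k).choose k ↔ ∃ i, 1 ≤ i ∧ p ^ i ≤ k % p ^ i + c % p ^ i := by
  set b := Nat.log p (c + k) + 1 with hb
  rw [← dvd_iff_emultiplicity_pos,
    hp.emultiplicity_choose' (show Nat.log p (c + k) < b from lt_succ_self _)]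
  rw [show (0 : ℕ∞) < (#{i ∈ Ico 1 b | p ^ i ≤ k % p ^ i + c % p ^ i} : ℕ∞) ↔
      0 < #{i ∈ Ico 1 b | p ^ i ≤ k % p ^ i + c % p ^ i} from by exact_mod_cast Iff.rfl]
  rw [Finset.card_pos]
  constructor
  · rintro ⟨i, hi⟩
    simp only [mem_filter, mem_Ico] at hi
    exact ⟨i, hi.1.1, hi.2⟩
  · rintro ⟨i, h1, h2⟩
    refine ⟨i, ?_⟩
    simp only [mem_filter, mem_Ico]
    have hpi : p ^ i ≤ c + k := h2.trans (by
      have := Nat.mod_le k (p ^ i); have := Nat.mod_le c (p ^ i); omega)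
    have : i ≤ Nat.log p (c + k) := Nat.le_log_of_pow_le hp.one_lt hpi
    exact ⟨⟨h1, by omega⟩, h2⟩

lemma james_aux1 (p c k j : ℕ) (hpjpos : 1 < p ^ j) (hkm : 1 ≤ k % p ^ j)
    (h : c % p ^ j = p ^ j - 1) : p ^ j ≤ k % p ^ j + c % p ^ j := by omega

lemma james_aux2 (p c k j : ℕ) (hpjpos : 1 < p ^ j) (h0 : (c + 1) % p ^ j = 0)
    (h : ¬c % p ^ j = p ^ j - 1) (hcm : (c + 1) % p ^ j = c % p ^ j + 1) :
    p ^ j ≤ k % p ^ j + c % p ^ j := by rw [h0] at hcm; exact absurd hcm.symm (Nat.succ_ne_zero _)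

/-- James, Corollary 22.4: for `a ≥ b ≥ 1`, the prime `p` divides all of
`C(a,b), C(a-1,b-1), …, C(a-b+1,1)` iff `a - b ≡ -1 (mod p^{l_p(b)})`, where
`l_p(b)` is the least `l` with `b < p^l`. -/
theorem james_corollary_22_5 (p : ℕ) (hp : p.Prime) (a b l : ℕ)
    (hba : b ≤ a) (hb : 1 ≤ b)
    (hl : b < p ^ l) (hl_min : ∀ m, b < p ^ m → l ≤ m) :
    (∀ i < b, p ∣ (a - i).choose (b - i)) ↔ p ^ l ∣ (a - b + 1) := by
  set c := a - b with hc
  clear_value c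
  constructor
  · intro H
    by_contra hnd
    have hl1 : 1 ≤ l := by
      by_contra h
      exact hnd (by simp [show l = 0 by omega])
    have hex : ∃ j, ¬ p ^ (j + 1) ∣ c + 1 := ⟨l - 1, by rwa [Nat.sub_add_cancel hl1]⟩
    set j := Nat.find hex with hjdef
    have hj : ¬ p ^ (j + 1) ∣ c + 1 := Nat.find_spec hex
    have hjl : j ≤ l - 1 := Nat.find_le (by rwa [Nat.sub_add_cancel hl1])
    clear_value j
    have hpj : p ^ j ∣ c + 1 := by
      rcases Nat.eq_zero_or_pos j with h0 | h0
      · simp [h0]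
      · have := Nat.find_min hex (show j - 1 < Nat.find hex by omega)
        rw [not_not] at this
        rwa [Nat.sub_add_cancel h0] at this
    have hkb : p ^ j ≤ b := by
      have h2 : p ^ (l - 1) ≤ b := by
        by_contra h
        have := hl_min (l - 1) (by omega)
        omega
      exact le_trans (Nat.pow_le_pow_right hp.pos hjl) h2
    have hk1 : 1 ≤ p ^ j := Nat.one_le_pow _ _ hp.pos
    have hkey := H (b - p ^ j) (by omega)
    rw [show a - (b - p ^ j) = c + p ^ j by omega,
        show b - (b - p ^ j) = p ^ j by omega] at hkey
    rw [carry_dvd_choose hp] at hkey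
    obtain ⟨i, hi1, hi2⟩ := hkey
    have hpipos : 0 < p ^ i := Nat.pow_pos hp.pos
    have hcmlt : c % p ^ i < p ^ i := Nat.mod_lt _ hpipos
    rcases le_or_gt i j with hij | hij
    · have hz : p ^ j % p ^ i = 0 := Nat.eq_zero_of_dvd_of_lt ((Nat.dvd_mod_iff (dvd_refl (p ^ i))).mpr (pow_dvd_pow p hij)) (Nat.mod_lt _ hpipos)
      omega
    · -- i > j
      have hplt : p ^ j < p ^ i := Nat.pow_lt_pow_right hp.one_lt hij
      rw [Nat.mod_eq_of_lt hplt] at hi2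
      have hne : (c + 1) % p ^ i ≠ 0 := by
        intro h
        exact hj (dvd_trans (pow_dvd_pow p (by omega)) (Nat.dvd_of_mod_eq_zero h))
      have hdvdmod : p ^ j ∣ (c + 1) % p ^ i :=
        (Nat.dvd_mod_iff (pow_dvd_pow p (le_of_lt hij))).mpr hpj
      obtain ⟨s, hs⟩ := hdvdmod
      have hslt : (c + 1) % p ^ i < p ^ i := Nat.mod_lt _ hpipos
      have hpieq : p ^ i = p ^ j * p ^ (i - j) := by
        rw [← pow_add]; congr 1; omega
      have hcup : (c + 1) % p ^ i ≤ p ^ i - p ^ j := by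
        have hsbound : s < p ^ (i - j) := by
          by_contra h
          have : p ^ i ≤ p ^ j * s := by
            calc p ^ i = p ^ j * p ^ (i - j) := hpieq
            _ ≤ p ^ j * s := Nat.mul_le_mul_left _ (by omega)
          omega
        have h3 : p ^ j * s ≤ p ^ j * (p ^ (i - j) - 1) := Nat.mul_le_mul_left _ (by omega)
        rw [Nat.mul_sub, mul_one, ← hpieq] at h3
        omega
      have hcm := succ_mod_aux (c := c) (m := p ^ i) (by
        exact lt_of_le_of_lt (Nat.one_le_pow _ _ hp.pos) hplt)
      split_ifs at hcm with h
      · exact hne hcm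
      · omega
  · intro hdvd i hib
    have hk1 : 1 ≤ b - i := by omega
    rw [show a - i = c + (b - i) by omega, carry_dvd_choose hp]
    set k := b - i with hk
    clear_value k
    have hwl : ¬ p ^ l ∣ k := fun h => by have := Nat.le_of_dvd (by omega) h; omega
    have hex : ∃ j, ¬ p ^ j ∣ k := ⟨l, hwl⟩
    set j := Nat.find hex with hjdef
    have hj : ¬ p ^ j ∣ k := Nat.find_spec hex
    have hjl : j ≤ l := Nat.find_le hwl
    clear_value j
    have hj1 : 1 ≤ j := by
      rcases Nat.eq_zero_or_pos j with h0 | h0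
      · exact absurd (by simpa [h0] using (one_dvd k)) (h0 ▸ hj)
      · exact h0
    refine ⟨j, hj1, ?_⟩
    have hpjpos : 1 < p ^ j := by
      calc 1 < p := hp.one_lt
      _ = p ^ 1 := (pow_one p).symm
      _ ≤ p ^ j := Nat.pow_le_pow_right hp.pos hj1
    have hkm : 1 ≤ k % p ^ j := by
      rcases Nat.eq_zero_or_pos (k % p ^ j) with h0 | h0
      · exact absurd (Nat.dvd_of_mod_eq_zero h0) hj
      · exact h0
    have hpj : p ^ j ∣ c + 1 := dvd_trans (pow_dvd_pow p hjl) hdvd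
    have h0 : (c + 1) % p ^ j = 0 := Nat.eq_zero_of_dvd_of_lt ((Nat.dvd_mod_iff dvd_rfl).mpr hpj) (Nat.mod_lt _ (by omega))
    have hcm := succ_mod_aux (c := c) (m := p ^ j) hpjpos
    split_ifs at hcm with h
    · exact james_aux1 p c k j hpjpos hkm h
    · exact james_aux2 p c k j hpjpos h0 h hcm
end

section
/- Let p be a prime, n ≥ 1, r ≥ 1, and 1 ≤ s < p^n. Then p divides the binomial coefficient C((r+1)p^n - s - 1, rp^n - 1). -/
/-- For a prime `p`, `n ≥ 1`, `r ≥ 1` and `1 ≤ s < p^n`,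
`p` divides `C((r+1)p^n - s - 1, rp^n - 1)`. -/
theorem p_dvd_choose_sub (p n r s : ℕ) (hp : p.Prime) (hn : 1 ≤ n) (hr : 1 ≤ r)
    (hs1 : 1 ≤ s) (hs2 : s < p ^ n) :
    p ∣ ((r + 1) * p ^ n - s - 1).choose (r * p ^ n - 1) := by
  set P := p ^ n with hP
  have hP1 : 1 < P := Nat.one_lt_pow (by omega) hp.one_lt
  set A := r * P - 1 with hA
  set B := P - s with hB
  have hrP : P ≤ r * P := Nat.le_mul_of_pos_left P hr
  have hEq : (r + 1) * P - s - 1 = B + A := by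
    have : (r + 1) * P = r * P + P := by ring
    omega
  rw [hEq]
  have hAmod : A % P = P - 1 := by
    have : A = (r - 1) * P + (P - 1) := by
      have h1 : (r - 1) * P + P = r * P := by
        have : r - 1 + 1 = r := by omega
        calc (r - 1) * P + P = (r - 1 + 1) * P := by ring
        _ = r * P := by rw [this]
      omega
    rw [this, Nat.add_comm, Nat.add_mul_mod_self_right, Nat.mod_eq_of_lt (by omega)]
  have hBmod : B % P = B := Nat.mod_eq_of_lt (by omega)
  have hlog : Nat.log p (B + A) < Nat.log p (B + A) + 1 := Nat.lt_succ_self _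
  have hcard := Nat.Prime.emultiplicity_choose' hp hlog
  have hmem : n ∈ Finset.filter
      (fun i => p ^ i ≤ A % p ^ i + B % p ^ i) (Finset.Ico 1 (Nat.log p (B + A) + 1)) := by
    rw [Finset.mem_filter, Finset.mem_Ico]
    refine ⟨⟨hn, ?_⟩, ?_⟩
    · have hPle : P ≤ B + A := by omega
      have := (Nat.le_log_iff_pow_le hp.one_lt (by omega)).mpr (hP ▸ hPle)
      omega
    · rw [← hP, hAmod, hBmod]; omega
  have h1le : (1 : ℕ∞) ≤ emultiplicity p ((B + A).choose A) := by
    rw [hcard]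
    exact_mod_cast Finset.card_pos.mpr ⟨n, hmem⟩
  have := pow_dvd_of_le_emultiplicity h1le
  simpa using this
end

section
/- Let p be a prime, n ≥ 1, r ≥ 1. For 0 ≤ i ≤ p^n - 1 with i ∉ {0, p^n - 1}, the product C(p^n - 1, i) · C(rp^n + 1, p^n - i) is divisible by p. -/
lemma p_dvd_choose_mul_pow (p : ℕ) (hp : p.Prime) :
    ∀ n r m : ℕ, m ≠ 0 → m < p ^ n → p ∣ (r * p ^ n).choose m := by
  intro n
  induction n with
  | zero => intro r m hm hlt; simp at hlt; omega
  | succ n ih =>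
    intro r m hm hlt
    haveI : Fact p.Prime := ⟨hp⟩
    have hmod := Choose.choose_modEq_choose_mod_mul_choose_div_nat
      (p := p) (n := r * p ^ (n+1)) (k := m)
    have hppos := hp.pos
    have h1 : r * p ^ (n+1) % p = 0 := by
      simp [pow_succ, Nat.mul_mod]
    have h2 : r * p ^ (n+1) / p = r * p ^ n := by
      rw [pow_succ, ← mul_assoc, Nat.mul_div_cancel _ hppos]
    rw [h1, h2] at hmod
    rcases Nat.eq_zero_or_pos (m % p) with h | h
    · -- m % p = 0, use induction hypothesis on m / p
      have hdm := Nat.div_add_mod m p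
      have hmp : m / p ≠ 0 := by
        intro h'; rw [h', h] at hdm; omega
      have hmp2 : m / p < p ^ n := by
        have := Nat.div_lt_div_of_lt_of_dvd (a := m) (b := p ^ (n+1)) (d := p)
          ⟨p ^ n, by ring⟩ hlt
        rwa [pow_succ, Nat.mul_div_cancel _ hppos] at this
      have := ih r (m / p) hmp hmp2
      have : p ∣ Nat.choose 0 (m % p) * (r * p ^ n).choose (m / p) :=
        Dvd.dvd.mul_left this _
      exact (Nat.modEq_zero_iff_dvd.mp
        (hmod.trans ((Nat.modEq_zero_iff_dvd.mpr this))))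
    · -- m % p ≠ 0, so choose 0 (m % p) = 0
      have h0 : Nat.choose 0 (m % p) = 0 := Nat.choose_eq_zero_of_lt h
      rw [h0, zero_mul] at hmod
      exact Nat.modEq_zero_iff_dvd.mp hmod

/-- For a prime `p`, `n ≥ 1`, `r ≥ 1`, and `0 ≤ i ≤ p ^ n - 1` with `i ∉ {0, p^n - 1}`,
`p` divides `C(p^n - 1, i) · C(rp^n + 1, p^n - i)`. -/
theorem p_dvd_product_choose (p n r i : ℕ) (hp : p.Prime) (hn : 1 ≤ n) (hr : 1 ≤ r)
    (hi : i ≤ p ^ n - 1) (hi0 : i ≠ 0) (hi1 : i ≠ p ^ n - 1) :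
    p ∣ (p ^ n - 1).choose i * (r * p ^ n + 1).choose (p ^ n - i) := by
  have hpn : 2 ≤ p ^ n := by
    have := hp.two_le
    calc 2 ≤ p := this
    _ = p ^ 1 := (pow_one p).symm
    _ ≤ p ^ n := Nat.pow_le_pow_right hp.pos hn
  set k := p ^ n - i with hk
  have hk2 : 2 ≤ k := by omega
  have hk1 : k ≤ p ^ n - 1 := by omega
  have hpascal : (r * p ^ n + 1).choose k
      = (r * p ^ n).choose (k - 1) + (r * p ^ n).choose k := by
    conv_lhs => rw [show k = (k - 1) + 1 from by omega]
    rw [Nat.choose_succ_succ, show (k - 1).succ = k from by omega]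
  have d1 : p ∣ (r * p ^ n).choose k :=
    p_dvd_choose_mul_pow p hp n r k (by omega) (by omega)
  have d2 : p ∣ (r * p ^ n).choose (k - 1) :=
    p_dvd_choose_mul_pow p hp n r (k - 1) (by omega) (by omega)
  exact Dvd.dvd.mul_left (hpascal ▸ Nat.dvd_add d2 d1) _
end

section
/- Let p be a prime, n ≥ 0, and a an integer with a ≥ p^n and a ≡ -1 (mod p^{n+1}). Then p does not divide C(a, p^n), while p divides C(a - v, p^n - v) for every v with 1 ≤ v ≤ p^n - 1. -/
/-- `p ∤ C(p-1, v)` for a prime `p`. -/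
lemma aux_not_dvd_choose_pred (p : ℕ) (hp : p.Prime) :
    ∀ v, v ≤ p - 1 → ¬ p ∣ (p - 1).choose v := by
  have hp2 := hp.two_le
  intro v
  induction v with
  | zero =>
    intro _ h
    rw [Nat.choose_zero_right, Nat.dvd_one] at h
    omega
  | succ v ih =>
    intro hv hdvd
    have hv' : v ≤ p - 1 := by omega
    have hsum := Nat.choose_succ_succ (p - 1) v
    rw [Nat.succ_eq_add_one, show p - 1 + 1 = p from by omega] at hsum
    have hps : p ∣ p.choose (v + 1) :=
      hp.dvd_choose_self (by simp) (by omega)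
    rw [hsum] at hps
    exact ih hv' ((Nat.dvd_add_right hdvd).mp (by rwa [Nat.add_comm] at hps))

/-- Mod/div decomposition for `a + 1 = p * t`. -/
lemma aux_mod_div (p a t : ℕ) (hp2 : 2 ≤ p) (ht : a + 1 = p * t) :
    a % p = p - 1 ∧ a / p = t - 1 := by
  obtain ⟨s, rfl⟩ : ∃ s, t = s + 1 := by
    rcases t with _ | s
    · omega
    · exact ⟨s, rfl⟩
  have ha : a = p * s + (p - 1) := by
    rw [Nat.mul_add, Nat.mul_one] at ht
    generalize p * s = m at ht ⊢
    omega
  subst ha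
  constructor
  · rw [Nat.mul_add_mod, Nat.mod_eq_of_lt (by omega)]
  · rw [Nat.mul_add_div (by omega), Nat.div_eq_of_lt (by omega)]
    omega

/-- If `a ≡ -1 (mod p^(n+1))` and `v < p^(n+1)` then `p ∤ C(a, v)`. -/
lemma aux_not_dvd_choose (p : ℕ) (hp : p.Prime) :
    ∀ n a v : ℕ, p ^ (n + 1) ∣ a + 1 → v < p ^ (n + 1) → ¬ p ∣ a.choose v := by
  haveI : Fact p.Prime := ⟨hp⟩
  have hp2 := hp.two_le
  intro n
  induction n with
  | zero =>
    intro a v hdvd hv hd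
    rw [pow_one] at hdvd hv
    obtain ⟨t, ht⟩ := hdvd
    obtain ⟨hmod, -⟩ := aux_mod_div p a t hp2 ht
    have hL := Choose.choose_modEq_choose_mod_mul_choose_div_nat (p := p) (n := a) (k := v)
    rw [hmod, Nat.mod_eq_of_lt hv, Nat.div_eq_of_lt hv, Nat.choose_zero_right, Nat.mul_one] at hL
    have : p ∣ (p - 1).choose v :=
      (Nat.modEq_zero_iff_dvd).mp ((hL.symm.trans (Nat.modEq_zero_iff_dvd.mpr hd)))
    exact aux_not_dvd_choose_pred p hp v (by omega) this
  | succ n ih =>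
    intro a v hdvd hv hd
    obtain ⟨t, ht⟩ := hdvd
    rw [pow_succ, Nat.mul_comm (p ^ (n+1)) p, Nat.mul_assoc] at ht
    obtain ⟨hmod, hdiv⟩ := aux_mod_div p a (p ^ (n+1) * t) hp2 ht
    have hT1 : 1 ≤ p ^ (n+1) * t := by
      by_contra h
      have : p ^ (n+1) * t = 0 := by omega
      rw [this, Nat.mul_zero] at ht
      omega
    have hdvd' : p ^ (n + 1) ∣ (a / p) + 1 := by
      rw [hdiv, Nat.sub_add_cancel hT1]
      exact Dvd.intro t rfl
    have hvlt : v / p < p ^ (n + 1) := by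
      rw [Nat.div_lt_iff_lt_mul (by omega)]
      calc v < p ^ (n + 1 + 1) := hv
      _ = p ^ (n + 1) * p := by ring
    have hL := Choose.choose_modEq_choose_mod_mul_choose_div_nat (p := p) (n := a) (k := v)
    rw [hmod] at hL
    have hprod : p ∣ (p - 1).choose (v % p) * (a / p).choose (v / p) :=
      (Nat.modEq_zero_iff_dvd).mp ((hL.symm.trans (Nat.modEq_zero_iff_dvd.mpr hd)))
    rcases hp.dvd_mul.mp hprod with h | h
    · exact aux_not_dvd_choose_pred p hp (v % p)
        (by have := Nat.mod_lt v (show 0 < p by omega); omega) h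
    · exact ih (a / p) (v / p) hdvd' hvlt h

/-- For a prime `p`, `n ≥ 0`, and `a ≥ p^n` with `a ≡ -1 (mod p^{n+1})`:
`p ∤ C(a, p^n)` and `p ∣ C(a - v, p^n - v)` for all `1 ≤ v ≤ p^n - 1`. -/
theorem choose_p_pow_divisibility (p n a : ℕ) (hp : p.Prime)
    (ha : p ^ n ≤ a) (hcong : p ^ (n + 1) ∣ a + 1) :
    ¬ p ∣ a.choose (p ^ n) ∧
      ∀ v, 1 ≤ v → v ≤ p ^ n - 1 → p ∣ (a - v).choose (p ^ n - v) := by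
  have hp2 := hp.two_le
  have h1 : ¬ p ∣ a.choose (p ^ n) :=
    aux_not_dvd_choose p hp n a (p ^ n) hcong (Nat.pow_lt_pow_succ hp.one_lt)
  refine ⟨h1, fun v hv1 hv2 => ?_⟩
  have hvlt : v < p ^ n := by
    have : 1 ≤ p ^ n := Nat.one_le_pow _ _ (by omega)
    omega
  have key := Nat.choose_mul (n := a) (k := p ^ n) (s := v) (le_of_lt hvlt)
  have hdvd1 : p ∣ (p ^ n).choose v :=
    Nat.Prime.dvd_choose_pow hp (by omega) (by omega)
  have hdvdL : p ∣ a.choose v * (a - v).choose (p ^ n - v) := by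
    rw [← key]; exact Dvd.dvd.mul_left hdvd1 _
  have h2 : ¬ p ∣ a.choose v :=
    aux_not_dvd_choose p hp n a v hcong
      (lt_trans hvlt (Nat.pow_lt_pow_succ hp.one_lt))
  rcases hp.dvd_mul.mp hdvdL with h | h
  · exact absurd h h2
  · exact h
end

section
/- Let c be a nonzero null (v, l, 0, ..., 0)-design with t+1 zero parameters (i.e., Σ_{x ⊇ y} c(x) = 0 for all s-subsets y with s ≤ t). Then the foundation of c has size at least t + l + 1. -/
/-- Graver–Jurkat: a nonzero null `(t,l)`-design on `{1,…,v}` has foundation of size at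
least `t + l + 1`. -/
theorem foundation_of_null_design (v t l : ℕ)
    (c : {x : Finset (Fin v) // x.card = l} → ℤ)
    (hnull : ∀ s ≤ t, ∀ y : Finset (Fin v), y.card = s →
      (∑ x : {x : Finset (Fin v) // x.card = l}, if y ⊆ x.1 then c x else 0) = 0)
    (hc : c ≠ 0) :
    t + l + 1 ≤ (Finset.univ.filter
      (fun i : Fin v => ∃ x : {x : Finset (Fin v) // x.card = l}, c x ≠ 0 ∧ i ∈ x.1)).card := by
  classical
  set F := Finset.univ.filter
      (fun i : Fin v => ∃ x : {x : Finset (Fin v) // x.card = l}, c x ≠ 0 ∧ i ∈ x.1) with hF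
  by_contra hlt
  push_neg at hlt
  obtain ⟨x₀, hx₀⟩ : ∃ x, c x ≠ 0 := by
    by_contra h; push_neg at h; exact hc (funext fun x => h x)
  have hsub : ∀ x : {x : Finset (Fin v) // x.card = l}, c x ≠ 0 → x.1 ⊆ F := by
    intro x hx i hi
    simp only [hF, Finset.mem_filter, Finset.mem_univ, true_and]
    exact ⟨x, hx, hi⟩
  have hx₀F : x₀.1 ⊆ F := hsub x₀ hx₀
  set B := F \ x₀.1 with hB
  have hBcard : B.card ≤ t := by
    have h1 : B.card = F.card - l := by
      rw [hB, Finset.card_sdiff_of_subset hx₀F, x₀.2]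
    have h2 : l ≤ F.card := x₀.2 ▸ Finset.card_le_card hx₀F
    omega
  have key : ∑ y ∈ B.powerset, (-1:ℤ)^y.card *
      (∑ x : {x : Finset (Fin v) // x.card = l}, if y ⊆ x.1 then c x else 0) = 0 := by
    apply Finset.sum_eq_zero
    intro y hy
    rw [hnull y.card (le_trans (Finset.card_le_card (Finset.mem_powerset.mp hy)) hBcard) y rfl,
      mul_zero]
  have swapped : ∑ y ∈ B.powerset, (-1:ℤ)^y.card *
      (∑ x : {x : Finset (Fin v) // x.card = l}, if y ⊆ x.1 then c x else 0)
      = ∑ x : {x : Finset (Fin v) // x.card = l},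
          (if B ∩ x.1 = ∅ then (1:ℤ) else 0) * c x := by
    simp_rw [Finset.mul_sum]
    rw [Finset.sum_comm]
    refine Finset.sum_congr rfl fun x _ => ?_
    have h1 : ∀ y ∈ B.powerset, (-1:ℤ)^y.card * (if y ⊆ x.1 then c x else 0)
        = if y ⊆ x.1 then (-1:ℤ)^y.card * c x else 0 := by
      intro y _; split <;> simp
    rw [Finset.sum_congr rfl h1, Finset.sum_ite, Finset.sum_const_zero, add_zero]
    have h2 : B.powerset.filter (fun y => y ⊆ x.1) = (B ∩ x.1).powerset := by
      ext y
      simp only [Finset.mem_filter, Finset.mem_powerset]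
      exact Finset.subset_inter_iff.symm
    rw [h2, ← Finset.sum_mul, Finset.sum_powerset_neg_one_pow_card]
  rw [swapped] at key
  have final : ∑ x : {x : Finset (Fin v) // x.card = l},
      (if B ∩ x.1 = ∅ then (1:ℤ) else 0) * c x = c x₀ := by
    rw [Finset.sum_eq_single x₀]
    · have : B ∩ x₀.1 = ∅ := by
        rw [hB]; exact Finset.sdiff_inter_self x₀.1 F
      rw [this]; simp
    · intro x _ hxne
      by_cases hcx : c x = 0
      · rw [hcx, mul_zero]
      · have hxF : x.1 ⊆ F := hsub x hcx
        have : B ∩ x.1 ≠ ∅ := by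
          intro hemp
          apply hxne
          have hsubx : x.1 ⊆ x₀.1 := by
            intro i hi
            by_contra hni
            have hiB : i ∈ B := Finset.mem_sdiff.mpr ⟨hxF hi, hni⟩
            have : i ∈ B ∩ x.1 := Finset.mem_inter.mpr ⟨hiB, hi⟩
            simp [hemp] at this
          have : x.1 = x₀.1 := Finset.eq_of_subset_of_card_le hsubx (by rw [x.2, x₀.2])
          exact Subtype.ext this
        rw [if_neg this, zero_mul]
    · intro h; exact absurd (Finset.mem_univ x₀) h
  rw [final] at key
  exact hx₀ key
end

section
/- Over ℤ, for t ≤ l ≤ v - t, the rank of the inclusion matrix G_{tl}(v) (rows indexed by t-subsets, columns by l-subsets of {1,...,v}, entries 1 for inclusion) over the rationals equals C(v, t). -/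
open Finset

/-- Counting supersets of `C` of size `l` in `Fin v`, via complementation. -/
lemma aux_count_supersets {v : ℕ} (l : ℕ) (hl : l ≤ v) (C : Finset (Fin v)) :
    ((Finset.univ.powersetCard l).filter (fun B => C ⊆ B)).card
      = (v - C.card).choose (v - l) := by
  have h1 : (Finset.powersetCard (v - l) Cᶜ).card = (v - C.card).choose (v - l) := by
    rw [Finset.card_powersetCard, Finset.card_compl, Fintype.card_fin]
  rw [← h1]
  apply Finset.card_bij (fun B _ => Bᶜ)
  · intro B hB
    simp only [mem_filter, Finset.mem_powersetCard_univ] at hB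
    rw [Finset.mem_powersetCard]
    exact ⟨Finset.compl_subset_compl.2 hB.2, by
      rw [Finset.card_compl, hB.1, Fintype.card_fin]⟩
  · intro B hB B' hB' h
    simpa using congrArg (·ᶜ) h
  · intro T hT
    rw [Finset.mem_powersetCard] at hT
    refine ⟨Tᶜ, ?_, by simp⟩
    simp only [mem_filter, Finset.mem_powersetCard_univ]
    constructor
    · rw [Finset.card_compl, hT.2, Fintype.card_fin, Nat.sub_sub_self hl]
    · rw [← Finset.compl_subset_compl, compl_compl]; exact hT.1

/-- Truncated Vandermonde identity. -/
lemma aux_vandermonde (i a b t : ℕ) (hit : i ≤ t) (htb : t ≤ b) :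
    (i + a).choose b = ∑ s ∈ Finset.range (t + 1), i.choose s * a.choose (b - s) := by
  rw [Nat.add_choose_eq, Finset.Nat.sum_antidiagonal_eq_sum_range_succ_mk]
  symm
  apply Finset.sum_subset
  · exact Finset.range_subset_range.2 (by omega)
  · intro s hs hs'
    have : i < s := by simp only [Finset.mem_range] at hs hs'; omega
    rw [Nat.choose_eq_zero_of_lt this, zero_mul]

lemma aux_count_common_subsets {v : ℕ} (s : ℕ) (A A' : Finset (Fin v)) :
    ((Finset.univ.powersetCard s).filter (fun S => S ⊆ A ∧ S ⊆ A')).card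
      = (A ∩ A').card.choose s := by
  rw [← Finset.card_powersetCard s (A ∩ A')]
  congr 1
  ext S
  simp [Finset.mem_powersetCard, Finset.subset_inter_iff]; tauto

/-- The key pointwise counting identity. -/
lemma aux_pointwise {v t l : ℕ} (htl : t ≤ l) (hlv : l ≤ v - t) (htv : t ≤ v)
    (A A' : Finset (Fin v)) (hA : A.card = t) (hA' : A'.card = t) :
    ((Finset.univ.powersetCard l).filter (fun B => A ⊆ B ∧ A' ⊆ B)).card
      = ∑ s ∈ Finset.range (t + 1),
          ((Finset.univ.powersetCard s).filter (fun S => S ⊆ A ∧ S ⊆ A')).card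
            * (v - 2 * t).choose (v - l - s) := by
  have hcard : (A ∪ A').card + (A ∩ A').card = 2 * t := by
    rw [Finset.card_union_add_card_inter, hA, hA']; ring
  have hi : (A ∩ A').card ≤ t := by
    rw [← hA]; exact Finset.card_le_card Finset.inter_subset_left
  have h1 : ((Finset.univ.powersetCard l).filter (fun B => A ⊆ B ∧ A' ⊆ B))
      = ((Finset.univ.powersetCard l).filter (fun B => A ∪ A' ⊆ B)) :=
    Finset.filter_congr fun B _ => (Finset.union_subset_iff).symm
  rw [h1, aux_count_supersets l (by omega) (A ∪ A')]
  have h2 : v - (A ∪ A').card = (A ∩ A').card + (v - 2 * t) := by omega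
  rw [h2, aux_vandermonde _ _ _ t hi (by omega)]
  exact Finset.sum_congr rfl fun s _ => by rw [aux_count_common_subsets]

/-- Expanding a sum of squares into a double sum against a counting kernel. -/
lemma aux_expand {v t n : ℕ} (x : {x : Finset (Fin v) // x.card = t} → ℚ)
    (r : Finset (Fin v) → Finset (Fin v) → Prop) [∀ a b, Decidable (r a b)] :
    ∑ B ∈ Finset.univ.powersetCard n,
        (∑ A : {x : Finset (Fin v) // x.card = t}, (if r A.1 B then x A else 0)) ^ 2
    = ∑ A : {x : Finset (Fin v) // x.card = t}, ∑ A' : {x : Finset (Fin v) // x.card = t},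
        x A * x A' *
          (((Finset.univ.powersetCard n).filter (fun B => r A.1 B ∧ r A'.1 B)).card : ℚ) := by
  simp only [sq, Finset.sum_mul_sum, ite_zero_mul_ite_zero]
  rw [Finset.sum_comm]
  refine Finset.sum_congr rfl fun A _ => ?_
  rw [Finset.sum_comm]
  refine Finset.sum_congr rfl fun A' _ => ?_
  rw [← Finset.sum_filter, Finset.sum_const, nsmul_eq_mul, mul_comm]

/-- The key identity: the quadratic form of the inclusion matrix is a nonnegative
combination of the quadratic forms of the smaller inclusion matrices. -/
lemma aux_key {v t l : ℕ} (htl : t ≤ l) (hlv : l ≤ v - t) (htv : t ≤ v)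
    (x : {x : Finset (Fin v) // x.card = t} → ℚ) :
    ∑ B ∈ Finset.univ.powersetCard l,
        (∑ A : {x : Finset (Fin v) // x.card = t}, (if A.1 ⊆ B then x A else 0)) ^ 2
    = ∑ s ∈ Finset.range (t + 1), ((v - 2 * t).choose (v - l - s) : ℚ) *
        ∑ S ∈ Finset.univ.powersetCard s,
          (∑ A : {x : Finset (Fin v) // x.card = t}, (if S ⊆ A.1 then x A else 0)) ^ 2 := by
  rw [aux_expand x (fun a b => a ⊆ b)]
  have hrhs : ∀ s, ∑ S ∈ Finset.univ.powersetCard s,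
      (∑ A : {x : Finset (Fin v) // x.card = t}, (if S ⊆ A.1 then x A else 0)) ^ 2
      = ∑ A : {x : Finset (Fin v) // x.card = t}, ∑ A' : {x : Finset (Fin v) // x.card = t},
          x A * x A' *
            (((Finset.univ.powersetCard s).filter (fun S => S ⊆ A.1 ∧ S ⊆ A'.1)).card : ℚ) :=
    fun s => aux_expand x (fun a b => b ⊆ a)
  simp only [hrhs]
  simp only [Finset.mul_sum]
  conv_rhs => rw [Finset.sum_comm]
  refine Finset.sum_congr rfl fun A _ => ?_
  rw [Finset.sum_comm]
  refine Finset.sum_congr rfl fun A' _ => ?_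
  have := aux_pointwise htl hlv htv A.1 A'.1 A.2 A'.2
  calc x A * x A' * (((Finset.univ.powersetCard l).filter
          (fun B => A.1 ⊆ B ∧ A'.1 ⊆ B)).card : ℚ)
      = x A * x A' * ∑ s ∈ Finset.range (t + 1),
          (((Finset.univ.powersetCard s).filter (fun S => S ⊆ A.1 ∧ S ⊆ A'.1)).card : ℚ)
            * ((v - 2 * t).choose (v - l - s) : ℚ) := by
        rw [this]; push_cast; ring
    _ = _ := by rw [Finset.mul_sum]; exact Finset.sum_congr rfl fun s _ => by ring


/-- Gottlieb / Graver–Jurkat: for `t ≤ l ≤ v - t`, the inclusion matrix `G_{tl}(v)`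
(rows indexed by `t`-subsets, columns by `l`-subsets of `{1,…,v}`, entries `1` for
inclusion) has rank `C(v, t)` over the rationals. -/
theorem inclusion_matrix_rank (v t l : ℕ) (htl : t ≤ l) (hlv : l ≤ v - t) :
    (Matrix.rank (fun (x : {x : Finset (Fin v) // x.card = t})
        (y : {y : Finset (Fin v) // y.card = l}) =>
        (if x.1 ⊆ y.1 then (1 : ℚ) else 0))) = v.choose t := by
  have htv : t ≤ v := le_trans htl (le_trans hlv (Nat.sub_le v t))
  set M : Matrix {x : Finset (Fin v) // x.card = t} {y : Finset (Fin v) // y.card = l} ℚ :=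
    fun x y => if x.1 ⊆ y.1 then (1 : ℚ) else 0 with hM
  have hinj : Function.Injective (Matrix.mulVecLin M.transpose) := by
    rw [← LinearMap.ker_eq_bot, LinearMap.ker_eq_bot']
    intro c hc
    have hg : ∀ B : {y : Finset (Fin v) // y.card = l},
        ∑ A : {x : Finset (Fin v) // x.card = t}, (if A.1 ⊆ B.1 then c A else 0) = 0 := by
      intro B
      have h0 := congrFun hc B
      simpa [Matrix.mulVecLin_apply, Matrix.mulVec, Matrix.vecMul, dotProduct, hM,
        Matrix.transpose_apply, Matrix.transpose, ite_mul, mul_ite, one_mul, zero_mul, mul_one, mul_zero] using h0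
    have hQ : ∑ B ∈ Finset.univ.powersetCard l,
        (∑ A : {x : Finset (Fin v) // x.card = t}, (if A.1 ⊆ B then c A else 0)) ^ 2 = 0 := by
      rw [Finset.sum_subtype (Finset.univ.powersetCard l)
        (fun B => Finset.mem_powersetCard_univ) (fun B =>
          (∑ A : {x : Finset (Fin v) // x.card = t}, (if A.1 ⊆ B then c A else 0)) ^ 2)]
      exact Finset.sum_eq_zero fun B _ => by rw [hg B]; exact zero_pow (by norm_num)
      infer_instance
    rw [aux_key htl hlv htv c] at hQ
    have hnonneg : ∀ s ∈ Finset.range (t + 1),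
        0 ≤ ((v - 2 * t).choose (v - l - s) : ℚ) *
          ∑ S ∈ Finset.univ.powersetCard s,
            (∑ A : {x : Finset (Fin v) // x.card = t}, (if S ⊆ A.1 then c A else 0)) ^ 2 :=
      fun s _ => mul_nonneg (Nat.cast_nonneg _)
        (Finset.sum_nonneg fun S _ => sq_nonneg _)
    have hterm := (Finset.sum_eq_zero_iff_of_nonneg hnonneg).1 hQ t (Finset.self_mem_range_succ t)
    have hct : ((v - 2 * t).choose (v - l - t) : ℚ) ≠ 0 := by
      have : v - l - t ≤ v - 2 * t := by omega
      exact_mod_cast (Nat.choose_pos this).ne'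
    have hT : ∑ S ∈ Finset.univ.powersetCard t,
        (∑ A : {x : Finset (Fin v) // x.card = t}, (if S ⊆ A.1 then c A else 0)) ^ 2 = 0 :=
      (mul_eq_zero.1 hterm).resolve_left hct
    funext A0
    have hA0mem : A0.1 ∈ Finset.univ.powersetCard t := Finset.mem_powersetCard_univ.2 A0.2
    have hy := (Finset.sum_eq_zero_iff_of_nonneg (fun S _ => sq_nonneg _)).1 hT A0.1 hA0mem
    have hyx : ∑ A : {x : Finset (Fin v) // x.card = t}, (if A0.1 ⊆ A.1 then c A else 0)
        = c A0 := by
      rw [Finset.sum_eq_single A0]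
      · rw [if_pos (subset_refl _)]
      · intro A _ hne
        rw [if_neg]
        intro hsub
        exact hne (Subtype.ext ((Finset.eq_of_subset_of_card_le hsub (by rw [A.2, A0.2])).symm))
      · intro h; exact absurd (Finset.mem_univ A0) h
    have : c A0 = 0 := by
      rw [← hyx]
      exact pow_eq_zero_iff (n := 2) (by norm_num) |>.1 hy
    simpa using this
  rw [← Matrix.rank_transpose M]
  have : M.transpose.rank = Module.finrank ℚ (LinearMap.range M.transpose.mulVecLin) := rfl
  rw [this, LinearMap.finrank_range_of_inj hinj, Module.finrank_pi,
    Fintype.card_finset_len, Fintype.card_fin]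
end

section
/- For t ≤ l ≤ v - t, the ℤ-module N_{tl}(v) of null designs (ℤ-valued functions c on l-subsets of {1,...,v} with Σ_{x ⊇ y} c(x) = 0 for every subset y of size ≤ t) is free of rank C(v, l) - C(v, t). -/
open Finset


lemma aux_countA {α : Type*} [DecidableEq α] {y x : Finset α} (hyx : y ⊆ x) {t : ℕ}
    (hst : y.card ≤ t) :
    ((x.powersetCard t).filter fun z => y ⊆ z).card = (x.card - y.card).choose (t - y.card) := by
  rw [← card_sdiff_of_subset hyx, ← Finset.card_powersetCard]
  apply Finset.card_bij' (fun z _ => z \ y) (fun w _ => w ∪ y)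
  · intro z hz
    simp only [mem_filter, mem_powersetCard] at hz
    simp only [mem_powersetCard]
    exact ⟨sdiff_subset_sdiff hz.1.1 le_rfl, by rw [card_sdiff_of_subset hz.2, hz.1.2]⟩
  · intro w hw
    simp only [mem_powersetCard] at hw
    have hdisj : Disjoint w y := (sdiff_disjoint.mono_left hw.1)
    simp only [mem_filter, mem_powersetCard]
    refine ⟨⟨union_subset (hw.1.trans (sdiff_subset)) hyx, ?_⟩, subset_union_right⟩
    rw [card_union_of_disjoint hdisj, hw.2]
    omega
  · intro z hz
    simp only [mem_filter, mem_powersetCard] at hz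
    exact sdiff_union_of_subset hz.2
  · intro w hw
    simp only [mem_powersetCard] at hw
    exact union_sdiff_cancel_right (sdiff_disjoint.mono_left hw.1)

def cnt (v t l i j : ℕ) : ℕ :=
  if i ≤ j ∧ j ≤ i + (l - t) ∧ j ≤ t then
    (t - i).choose (j - i) * (v - 2*t + i).choose (l - t - (j - i)) else 0



lemma aux_countB {α : Type*} [DecidableEq α] [Fintype α] {t l : ℕ} {z z0 : Finset α}
    (hz : z.card = t) (hz0 : z0.card = t) (htl : t ≤ l)
    (hlv : l ≤ Fintype.card α - t) (j : ℕ) :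
    (((univ : Finset α).powersetCard l).filter fun x => z ⊆ x ∧ (x ∩ z0).card = j).card
      = cnt (Fintype.card α) t l ((z ∩ z0).card) j := by
  set v := Fintype.card α with hv
  set i := (z ∩ z0).card with hi
  have hit : i ≤ t := by
    rw [hi, ← hz]; exact card_le_card inter_subset_left
  have h2tv : 2 * t ≤ v := by omega
  -- facts forced on any member of the filter
  have hforce : ∀ x : Finset α, x.card = l → z ⊆ x → (x ∩ z0).card = j →
      i ≤ j ∧ j ≤ i + (l - t) ∧ j ≤ t := by
    intro x hxl hzx hxj
    have h1 : i ≤ j := by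
      rw [hi, ← hxj]
      exact card_le_card (inter_subset_inter hzx le_rfl)
    have h2 : j ≤ t := by
      rw [← hxj, ← hz0]; exact card_le_card inter_subset_right
    have h3 : (z ∪ x ∩ z0).card + (z ∩ (x ∩ z0)).card = t + j := by
      rw [card_union_add_card_inter, hz, hxj]
    have h4 : z ∩ (x ∩ z0) = z ∩ z0 := by
      ext u; simp only [mem_inter]
      exact ⟨fun h => ⟨h.1, h.2.2⟩, fun h => ⟨h.1, hzx h.1, h.2⟩⟩
    have h5 : (z ∪ x ∩ z0).card ≤ l := by
      rw [← hxl]; exact card_le_card (union_subset hzx inter_subset_left)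
    rw [h4, ← hi] at h3
    omega
  by_cases hcond : i ≤ j ∧ j ≤ i + (l - t) ∧ j ≤ t
  swap
  · rw [cnt, if_neg hcond]
    rw [card_eq_zero, filter_eq_empty_iff]
    intro x hx
    simp only [mem_powersetCard] at hx
    intro ⟨h1, h2⟩
    exact hcond (hforce x hx.2 h1 h2)
  obtain ⟨hij, hjl, hjt⟩ := hcond
  rw [cnt, if_pos ⟨hij, hjl, hjt⟩]
  have hcz0z : (z0 \ z).card = t - i := by
    have := card_sdiff_add_card_inter z0 z
    rw [hz0, inter_comm, ← hi] at this; omega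
  have hczz0 : ((z0 ∪ z)ᶜ).card = v - 2*t + i := by
    have h1 : (z0 ∪ z).card + (z0 ∩ z).card = t + t := by
      rw [card_union_add_card_inter, hz0, hz]
    rw [card_compl]
    rw [inter_comm, ← hi] at h1
    omega
  rw [← hcz0z, ← hczz0, ← Finset.card_powersetCard, ← Finset.card_powersetCard,
    ← Finset.card_product]
  apply Finset.card_bij' (fun x _ => ((x ∩ z0) \ z, x \ (z0 ∪ z)))
    (fun p _ => z ∪ p.1 ∪ p.2)
  · -- forward membership
    intro x hx
    simp only [mem_filter, mem_powersetCard] at hx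
    obtain ⟨⟨-, hxl⟩, hzx, hxj⟩ := hx
    have h4 : (x ∩ z0) ∩ z = z ∩ z0 := by
      ext u; simp only [mem_inter]
      exact ⟨fun h => ⟨h.2, h.1.2⟩, fun h => ⟨⟨hzx h.1, h.2⟩, h.1⟩⟩
    simp only [mem_product, mem_powersetCard]
    refine ⟨⟨sdiff_subset_sdiff inter_subset_right le_rfl, ?_⟩, ⟨?_, ?_⟩⟩
    · have := card_sdiff_add_card_inter (x ∩ z0) z
      rw [h4, ← hi, hxj] at this; omega
    · intro u hu
      simp only [mem_sdiff] at hu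
      simpa using hu.2
    · have h6 : x ∩ (z0 ∪ z) = (x ∩ z0) ∪ z := by
        ext u
        simp only [mem_inter, mem_union]
        constructor
        · rintro ⟨h1, h2 | h2⟩
          · exact Or.inl ⟨h1, h2⟩
          · exact Or.inr h2
        · rintro (⟨h1, h2⟩ | h1)
          · exact ⟨h1, Or.inl h2⟩
          · exact ⟨hzx h1, Or.inr h1⟩
      have h7 := card_sdiff_add_card_inter x (z0 ∪ z)
      have h8 := card_union_add_card_inter (x ∩ z0) z
      rw [h6] at h7
      rw [h4, ← hi] at h8
      rw [hxl, hxj] at *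
      omega
  · -- backward membership
    rintro ⟨a, b⟩ hab
    simp only [mem_product, mem_powersetCard] at hab
    obtain ⟨⟨haz, hac⟩, hbz, hbc⟩ := hab
    have Ha : ∀ u ∈ a, u ∈ z0 ∧ u ∉ z := fun u hu => mem_sdiff.mp (haz hu)
    have Hb : ∀ u ∈ b, u ∉ z0 ∧ u ∉ z := by
      intro u hu
      have := hbz hu
      simp only [mem_compl, mem_union] at this
      tauto
    simp only [mem_filter, mem_powersetCard]
    have hdzab : Disjoint (z ∪ a) b := by
      rw [disjoint_left]
      intro u hu hub
      rcases mem_union.mp hu with h | h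
      · exact (Hb u hub).2 h
      · exact (Hb u hub).1 (Ha u h).1
    have hdza : Disjoint z a := by
      rw [disjoint_left]
      intro u hu hua
      exact (Ha u hua).2 hu
    have hcard : (z ∪ a ∪ b).card = l := by
      rw [card_union_of_disjoint hdzab, card_union_of_disjoint hdza, hz, hac, hbc]
      omega
    refine ⟨⟨subset_univ _, hcard⟩, subset_union_left.trans subset_union_left, ?_⟩
    have : (z ∪ a ∪ b) ∩ z0 = (z ∩ z0) ∪ a := by
      ext u
      simp only [mem_inter, mem_union]
      constructor
      · rintro ⟨(h1 | h1) | h1, h2⟩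
        · exact Or.inl ⟨h1, h2⟩
        · exact Or.inr h1
        · exact absurd h2 (Hb u h1).1
      · rintro (⟨h1, h2⟩ | h1)
        · exact ⟨Or.inl (Or.inl h1), h2⟩
        · exact ⟨Or.inl (Or.inr h1), (Ha u h1).1⟩
    rw [this, card_union_of_disjoint, ← hi, hac]
    · omega
    · rw [disjoint_left]
      intro u hu hua
      exact (Ha u hua).2 (mem_inter.mp hu).1
  · -- left inverse
    intro x hx
    simp only [mem_filter, mem_powersetCard] at hx
    obtain ⟨-, hzx, -⟩ := hx
    ext u
    simp only [mem_union, mem_sdiff, mem_inter, mem_union]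
    constructor
    · rintro ((h | ⟨⟨h, -⟩, -⟩) | ⟨h, -⟩) <;> [exact hzx h; exact h; exact h]
    · intro hu
      by_cases h1 : u ∈ z
      · exact Or.inl (Or.inl h1)
      by_cases h2 : u ∈ z0
      · exact Or.inl (Or.inr ⟨⟨hu, h2⟩, h1⟩)
      · exact Or.inr ⟨hu, by simp [h1, h2]⟩
  · -- right inverse
    rintro ⟨a, b⟩ hab
    simp only [mem_product, mem_powersetCard] at hab
    obtain ⟨⟨haz, -⟩, hbz, -⟩ := hab
    have Ha : ∀ u ∈ a, u ∈ z0 ∧ u ∉ z := fun u hu => mem_sdiff.mp (haz hu)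
    have Hb : ∀ u ∈ b, u ∉ z0 ∧ u ∉ z := by
      intro u hu
      have := hbz hu
      simp only [mem_compl, mem_union] at this
      tauto
    have e1 : ((z ∪ a ∪ b) ∩ z0) \ z = a := by
      ext u
      simp only [mem_sdiff, mem_inter, mem_union]
      constructor
      · rintro ⟨⟨(h1 | h1) | h1, h2⟩, h3⟩
        · exact absurd h1 h3
        · exact h1
        · exact absurd h2 (Hb u h1).1
      · intro hu
        exact ⟨⟨Or.inl (Or.inr hu), (Ha u hu).1⟩, (Ha u hu).2⟩
    have e2 : (z ∪ a ∪ b) \ (z0 ∪ z) = b := by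
      ext u
      simp only [mem_sdiff, mem_union, not_or]
      constructor
      · rintro ⟨(h1 | h1) | h1, h2, h3⟩
        · exact absurd h1 h3
        · exact absurd (Ha u h1).1 h2
        · exact h1
      · intro hu
        exact ⟨Or.inr hu, (Hb u hu).1, (Hb u hu).2⟩
    rw [e1, e2]

lemma aux_transfer {n k : ℕ} (p : Finset (Fin n) → Prop) [DecidablePred p] :
    (Finset.univ.filter fun x : {x : Finset (Fin n) // x.card = k} => p x.1).card
      = (((Finset.univ : Finset (Fin n)).powersetCard k).filter p).card := by
  apply Finset.card_bij (fun x _ => x.1)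
  · intro a ha
    simp only [mem_filter, mem_powersetCard, mem_univ, true_and] at *
    exact ⟨⟨subset_univ _, a.2⟩, ha⟩
  · intro a _ b _ h; exact Subtype.ext h
  · intro b hb
    simp only [mem_filter, mem_powersetCard, mem_univ, true_and] at hb
    exact ⟨⟨b, hb.1.2⟩, by simpa using hb.2, rfl⟩

/-- Graver–Jurkat: for `t ≤ l ≤ v - t`, the `ℤ`-module of null designs (functions `c`
on `l`-subsets of `{1,…,v}` all of whose sums over `l`-subsets containing a fixed set of
size `≤ t` vanish) is free of rank `C(v,l) - C(v,t)`. -/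
theorem null_designs_free_rank (v t l : ℕ) (htl : t ≤ l) (hlv : l ≤ v - t) :
    ∃ N : Submodule ℤ ({x : Finset (Fin v) // x.card = l} → ℤ),
      (N : Set ({x : Finset (Fin v) // x.card = l} → ℤ)) =
        {c | ∀ s ≤ t, ∀ y : Finset (Fin v), y.card = s →
          (∑ x : {x : Finset (Fin v) // x.card = l}, if y ⊆ x.1 then c x else 0) = 0} ∧
      Module.Free ℤ N ∧
      Module.finrank ℤ N = v.choose l - v.choose t := by
  classical
  have h2tv : 2 * t ≤ v := by omega
  let T : ({x : Finset (Fin v) // x.card = l} → ℤ) →ₗ[ℤ]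
      ({z : Finset (Fin v) // z.card = t} → ℤ) :=
    { toFun := fun c z => ∑ x : {x : Finset (Fin v) // x.card = l},
        if z.1 ⊆ x.1 then c x else 0
      map_add' := by
        intro c d; funext z
        simp only [Pi.add_apply]
        rw [← Finset.sum_add_distrib]
        refine Finset.sum_congr rfl fun x _ => ?_
        by_cases h : z.1 ⊆ x.1 <;> simp [h]
      map_smul' := by
        intro m c; funext z
        simp only [RingHom.id_apply, Pi.smul_apply, smul_eq_mul]
        rw [Finset.mul_sum]
        refine Finset.sum_congr rfl fun x _ => ?_
        by_cases h : z.1 ⊆ x.1 <;> simp [h] }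
  have hTc : ∀ c, T c = fun z : {z : Finset (Fin v) // z.card = t} =>
      ∑ x : {x : Finset (Fin v) // x.card = l}, if z.1 ⊆ x.1 then c x else 0 := fun _ => rfl
  refine ⟨LinearMap.ker T, ?_, ?_, ?_⟩
  · -- set equality
    ext c
    simp only [SetLike.mem_coe, LinearMap.mem_ker, Set.mem_setOf_eq]
    constructor
    · intro hc s hs y hy
      have h0 : ∀ z : {z : Finset (Fin v) // z.card = t},
          (∑ x : {x : Finset (Fin v) // x.card = l}, if z.1 ⊆ x.1 then c x else 0) = 0 := by
        intro z
        have := congrFun hc z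
        rwa [hTc] at this
      have key : (((l - s).choose (t - s) : ℤ)) *
          (∑ x : {x : Finset (Fin v) // x.card = l}, if y ⊆ x.1 then c x else 0)
          = ∑ z : {z : Finset (Fin v) // z.card = t},
              ∑ x : {x : Finset (Fin v) // x.card = l},
                if y ⊆ z.1 ∧ z.1 ⊆ x.1 then c x else 0 := by
        rw [Finset.sum_comm, Finset.mul_sum]
        refine Finset.sum_congr rfl fun x _ => Eq.symm ?_
        have hcard : (Finset.univ.filter fun z : {z : Finset (Fin v) // z.card = t} =>
            y ⊆ z.1 ∧ z.1 ⊆ x.1).card = if y ⊆ x.1 then (l-s).choose (t-s) else 0 := by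
          rw [aux_transfer (fun w => y ⊆ w ∧ w ⊆ (x : Finset (Fin v)))]
          split_ifs with h
          · have : ((Finset.univ : Finset (Fin v)).powersetCard t).filter
                (fun w => y ⊆ w ∧ w ⊆ x.1) = (x.1.powersetCard t).filter (y ⊆ ·) := by
              ext w
              simp only [mem_filter, mem_powersetCard, subset_univ, true_and]
              tauto
            rw [this, aux_countA h (by omega), x.2, hy]
          · rw [card_eq_zero, filter_eq_empty_iff]
            intro w _ hw
            exact h (hw.1.trans hw.2)
        calc (∑ z : {z : Finset (Fin v) // z.card = t},
                if y ⊆ z.1 ∧ z.1 ⊆ x.1 then c x else 0)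
            = (Finset.univ.filter fun z : {z : Finset (Fin v) // z.card = t} =>
                y ⊆ z.1 ∧ z.1 ⊆ x.1).card • c x := by
              rw [← Finset.sum_filter, Finset.sum_const]
          _ = ((l - s).choose (t - s) : ℤ) * (if y ⊆ x.1 then c x else 0) := by
              rw [hcard]
              split_ifs with h <;> simp [nsmul_eq_mul]
      have hzero : (∑ z : {z : Finset (Fin v) // z.card = t},
          ∑ x : {x : Finset (Fin v) // x.card = l},
            if y ⊆ z.1 ∧ z.1 ⊆ x.1 then c x else 0) = 0 := by
        refine Finset.sum_eq_zero fun z _ => ?_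
        by_cases hyz : y ⊆ z.1
        · simp only [hyz, true_and]
          exact h0 z
        · exact Finset.sum_eq_zero fun x _ => if_neg (fun hq => hyz hq.1)
      have hC : (((l - s).choose (t - s) : ℤ)) ≠ 0 :=
        Int.natCast_ne_zero.mpr (Nat.choose_pos (by omega)).ne'
      exact (mul_eq_zero.mp (key.trans hzero)).resolve_left hC
    · intro h
      rw [hTc]
      funext z
      exact h t le_rfl z.1 z.2
  · -- freeness
    haveI : Module.Finite ℤ ↥(LinearMap.ker T) :=
      Module.Finite.iff_fg.mpr (IsNoetherian.noetherian _)
    haveI : Module.IsTorsionFree ℤ ↥(LinearMap.ker T) := inferInstance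
    exact Module.free_of_finite_type_torsion_free'
  · -- finrank
    haveI : Module.Finite ℤ ↥(LinearMap.ker T) :=
      Module.Finite.iff_fg.mpr (IsNoetherian.noetherian _)
    let Mz : Matrix (Fin (t+1)) (Fin (t+1)) ℤ := fun i j => (cnt v t l i j : ℤ)
    have hMzdiag : ∀ i : Fin (t+1), Mz i i = ((v - 2*t + (i:ℕ)).choose (l - t) : ℤ) := by
      intro i
      have hi : (i:ℕ) ≤ t := by omega
      show (cnt v t l i i : ℤ) = _
      rw [cnt, if_pos ⟨le_rfl, by omega, hi⟩]
      simp [Nat.sub_self]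
    have hdet : Mz.det = ∏ i : Fin (t+1), ((v - 2*t + (i:ℕ)).choose (l - t) : ℤ) := by
      rw [Matrix.det_of_upperTriangular]
      · exact Finset.prod_congr rfl fun i _ => hMzdiag i
      · intro i j hij
        show (cnt v t l i j : ℤ) = 0
        rw [cnt, if_neg]
        · simp
        · rintro ⟨h1, -⟩
          have : (j : ℕ) < (i : ℕ) := hij
          omega
    set D : ℤ := ∏ i : Fin (t+1), ((v - 2*t + (i:ℕ)).choose (l - t) : ℤ) with hDdef
    have hD : D ≠ 0 := by
      rw [hDdef]
      refine Finset.prod_ne_zero_iff.mpr fun i _ => ?_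
      exact Int.natCast_ne_zero.mpr (Nat.choose_pos (by omega)).ne'
    let e : Fin (t+1) → ℤ := fun i => if i = Fin.last t then 1 else 0
    let β : Fin (t+1) → ℤ := Mz.adjugate.mulVec e
    have hMβ : Mz.mulVec β = D • e := by
      show Mz.mulVec (Mz.adjugate.mulVec e) = _
      rw [Matrix.mulVec_mulVec, Matrix.mul_adjugate, hdet, Matrix.smul_mulVec,
        Matrix.one_mulVec]
    have key : ∀ z0 : {z : Finset (Fin v) // z.card = t},
        (fun z : {z : Finset (Fin v) // z.card = t} => if z0 = z then D else 0)
          ∈ LinearMap.range T := by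
      intro z0
      have hidx : ∀ x : {x : Finset (Fin v) // x.card = l}, (x.1 ∩ z0.1).card < t + 1 := by
        intro x
        have : (x.1 ∩ z0.1).card ≤ z0.1.card := card_le_card inter_subset_right
        rw [z0.2] at this; omega
      refine ⟨fun x => β ⟨(x.1 ∩ z0.1).card, hidx x⟩, ?_⟩
      rw [hTc]
      funext z
      have hzi : (z.1 ∩ z0.1).card < t + 1 := by
        have : (z.1 ∩ z0.1).card ≤ z0.1.card := card_le_card inter_subset_right
        rw [z0.2] at this; omega
      have step1 : (∑ x : {x : Finset (Fin v) // x.card = l},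
          if z.1 ⊆ x.1 then β ⟨(x.1 ∩ z0.1).card, hidx x⟩ else 0)
          = ∑ j : Fin (t+1), (cnt v t l ((z.1 ∩ z0.1).card) j : ℤ) * β j := by
        rw [← Finset.sum_fiberwise_of_maps_to
          (fun x _ => Finset.mem_univ (⟨(x.1 ∩ z0.1).card, hidx x⟩ : Fin (t+1)))]
        refine Finset.sum_congr rfl fun j _ => ?_
        have hr : ∀ x ∈ Finset.univ.filter (fun x : {x : Finset (Fin v) // x.card = l} =>
            (⟨(x.1 ∩ z0.1).card, hidx x⟩ : Fin (t+1)) = j),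
            (if z.1 ⊆ x.1 then β ⟨(x.1 ∩ z0.1).card, hidx x⟩ else 0)
              = if z.1 ⊆ x.1 then β j else 0 := by
          intro x hx
          rw [(Finset.mem_filter.mp hx).2]
        rw [Finset.sum_congr rfl hr, ← Finset.sum_filter, Finset.filter_filter,
          Finset.sum_const]
        have heq : ∀ x : {x : Finset (Fin v) // x.card = l},
            ((⟨(x.1 ∩ z0.1).card, hidx x⟩ : Fin (t+1)) = j ∧ z.1 ⊆ x.1)
            ↔ (z.1 ⊆ x.1 ∧ (x.1 ∩ z0.1).card = (j:ℕ)) := by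
          intro x
          rw [Fin.ext_iff]
          exact ⟨fun h => ⟨h.2, h.1⟩, fun h => ⟨h.2, h.1⟩⟩
        rw [Finset.filter_congr (fun x _ => heq x),
          aux_transfer (fun w => z.1 ⊆ w ∧ (w ∩ z0.1).card = (j:ℕ))]
        have hcnt := aux_countB (z := z.1) (z0 := z0.1) z.2 z0.2 htl
          (by rw [Fintype.card_fin]; exact hlv) (j:ℕ)
        rw [Fintype.card_fin] at hcnt
        rw [hcnt]
        simp [nsmul_eq_mul]
      rw [step1]
      have step2 : (∑ j : Fin (t+1), (cnt v t l ((z.1 ∩ z0.1).card) j : ℤ) * β j)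
          = Mz.mulVec β ⟨(z.1 ∩ z0.1).card, hzi⟩ := rfl
      rw [step2, hMβ]
      simp only [Pi.smul_apply, smul_eq_mul, e]
      by_cases hzz : z0 = z
      · have hl : (⟨(z.1 ∩ z0.1).card, hzi⟩ : Fin (t+1)) = Fin.last t := by
          rw [Fin.ext_iff, Fin.val_last]
          show (z.1 ∩ z0.1).card = t
          rw [← hzz, inter_self, z0.2]
        rw [if_pos hl, if_pos hzz, mul_one]
      · have hl : (⟨(z.1 ∩ z0.1).card, hzi⟩ : Fin (t+1)) ≠ Fin.last t := by
          intro hlast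
          apply hzz
          have hcard : (z.1 ∩ z0.1).card = t := by
            have := congrArg Fin.val hlast
            simpa using this
          have h1 : z.1 ∩ z0.1 = z.1 :=
            Finset.eq_of_subset_of_card_le inter_subset_left (by rw [hcard, z.2])
          have h2 : z.1 = z0.1 :=
            Finset.eq_of_subset_of_card_le (by rw [← h1]; exact inter_subset_right)
              (by rw [z.2, z0.2])
          exact (Subtype.ext h2).symm
        rw [if_neg hl, if_neg hzz, mul_zero]
    have hq0 : Module.rank ℤ
        (({z : Finset (Fin v) // z.card = t} → ℤ) ⧸ LinearMap.range T) = 0 := by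
      rw [rank_eq_zero_iff]
      intro w
      obtain ⟨w, rfl⟩ := Submodule.Quotient.mk_surjective _ w
      refine ⟨D, hD, ?_⟩
      rw [← Submodule.Quotient.mk_smul, Submodule.Quotient.mk_eq_zero]
      have hdec : D • w = ∑ z : {z : Finset (Fin v) // z.card = t},
          w z • (fun z' : {z : Finset (Fin v) // z.card = t} => if z = z' then D else 0) := by
        funext z'
        simp only [Pi.smul_apply, smul_eq_mul, Finset.sum_apply, mul_ite, mul_zero, mul_one,
          Finset.sum_ite_eq, Finset.sum_ite_eq', Finset.mem_univ, if_true]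
        ring
      rw [hdec]
      exact Submodule.sum_mem _ fun z _ => Submodule.smul_mem _ _ (key z)
    have h2 := Submodule.rank_quotient_add_rank (LinearMap.range T)
    rw [hq0, zero_add, rank_fun'] at h2
    have h1 := LinearMap.rank_range_add_rank_ker T
    rw [h2, rank_fun', Fintype.card_finset_len, Fintype.card_finset_len, Fintype.card_fin] at h1
    rw [← Module.finrank_eq_rank] at h1
    have h3 : v.choose t + Module.finrank ℤ ↥(LinearMap.ker T) = v.choose l := by
      exact_mod_cast h1
    omega
end

section
/- For all integers a ≥ b ≥ 1, the strict inequality b/(a+1) + 1/(b+1) + (a+1)(a-b+1)b / ((a+2)(a+1)(b+1)) < 1 + a!·b!/(a+b)! + b!/(b+1)! holds. -/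
/-- For all integers `a ≥ b ≥ 1`,
`b/(a+1) + 1/(b+1) + (a+1)(a-b+1)b/((a+2)(a+1)(b+1)) < 1 + a!b!/(a+b)! + b!/(b+1)!`. -/
theorem key_inequality (a b : ℕ) (hb : 1 ≤ b) (hba : b ≤ a) :
    (b : ℚ) / (a + 1) + 1 / (b + 1) +
        ((a : ℚ) + 1) * ((a : ℚ) - (b : ℚ) + 1) * (b : ℚ) /
          (((a : ℚ) + 2) * ((a : ℚ) + 1) * ((b : ℚ) + 1)) <
      1 + ((a.factorial : ℚ) * (b.factorial : ℚ)) / ((a + b).factorial : ℚ) +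
        (b.factorial : ℚ) / ((b + 1).factorial : ℚ) := by
  have ha1 : (0:ℚ) < (a:ℚ) + 1 := by positivity
  have ha2 : (0:ℚ) < (a:ℚ) + 2 := by positivity
  have hb1 : (0:ℚ) < (b:ℚ) + 1 := by positivity
  have hbQ : (1:ℚ) ≤ (b:ℚ) := by exact_mod_cast hb
  have hbaQ : (b:ℚ) ≤ (a:ℚ) := by exact_mod_cast hba
  have hfb : (0:ℚ) < (b.factorial : ℚ) := by exact_mod_cast b.factorial_pos
  have hfab : (0:ℚ) < ((a+b).factorial : ℚ) := by exact_mod_cast (a+b).factorial_pos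
  have hF : 0 < ((a.factorial : ℚ) * (b.factorial : ℚ)) / ((a + b).factorial : ℚ) := by
    have : (0:ℚ) < (a.factorial : ℚ) := by exact_mod_cast a.factorial_pos
    positivity
  have hlast : (b.factorial : ℚ) / ((b + 1).factorial : ℚ) = 1 / ((b:ℚ) + 1) := by
    rw [Nat.factorial_succ]
    push_cast
    rw [div_eq_div_iff (by positivity) (ne_of_gt hb1)]
    ring
  rw [hlast]
  have key : (b : ℚ) / (a + 1) +
        ((a : ℚ) + 1) * ((a : ℚ) - (b : ℚ) + 1) * (b : ℚ) /
          (((a : ℚ) + 2) * ((a : ℚ) + 1) * ((b : ℚ) + 1)) ≤ 1 := by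
    rw [div_add_div _ _ (ne_of_gt ha1) (by positivity), div_le_one (by positivity)]
    nlinarith [mul_nonneg (mul_nonneg (by linarith : (0:ℚ) ≤ (a:ℚ) - (b:ℚ) + 1)
      (by linarith : (0:ℚ) ≤ (a:ℚ) + (b:ℚ) + 2)) ha1.le]
  linarith
end
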